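/- Let 0 < δ < 1, ε > 0, and σ_ℓ = 1/2 + 1/(2·exp(ℓ^{1-δ})). Then the ratio ((∑_p p^{-2σ_ℓ}) / (∑_p p^{-2σ_{ℓ-1}}))^{(1+ε)/2} tends to 1 as ℓ → ∞. -/

import Mathlib

open Real Filter Topology


lemma aux_log_lb {x : ℝ} (h1 : x < 1) : x ≤ -Real.log (1 - x) := by
  have h := Real.log_le_sub_one_of_pos (x := 1 - x) (by linarith)
  linarith

lemma aux_log_ub {x : ℝ} (h0 : 0 ≤ x) (h1 : x ≤ 1/2) :
    -Real.log (1 - x) ≤ x + 2 * x ^ 2 := by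
  have hpos : 0 < 1 - x := by linarith
  have h := Real.log_le_sub_one_of_pos (x := (1 - x)⁻¹) (by positivity)
  rw [Real.log_inv] at h
  have h2 : (1 - x)⁻¹ - 1 ≤ x + 2 * x ^ 2 := by
    rw [sub_le_iff_le_add, inv_le_iff_one_le_mul₀ hpos]
    nlinarith
  linarith

lemma aux_x_pos {t : ℝ} (p : Nat.Primes) : 0 < (p : ℝ) ^ (-t) :=
  Real.rpow_pos_of_pos (by exact_mod_cast p.prop.pos) _

lemma aux_x_le_half {t : ℝ} (ht : 1 ≤ t) (p : Nat.Primes) : (p : ℝ) ^ (-t) ≤ 1/2 := by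
  have hp2 : (2 : ℝ) ≤ (p : ℝ) := by exact_mod_cast p.prop.two_le
  have h1 : (p : ℝ) ^ (-t) ≤ (p : ℝ) ^ (-1 : ℝ) :=
    Real.rpow_le_rpow_of_exponent_le (by linarith) (by linarith)
  rw [Real.rpow_neg_one] at h1
  have : ((p:ℝ))⁻¹ ≤ 1/2 := by
    rw [inv_le_comm₀ (by linarith) (by norm_num)]
    linarith
  linarith

lemma aux_summable_P {t : ℝ} (ht : 1 < t) :
    Summable (fun p : Nat.Primes => (p : ℝ) ^ (-t)) :=
  Nat.Primes.summable_rpow.mpr (by linarith)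

lemma aux_summable_log {t : ℝ} (ht : 1 < t) :
    Summable (fun p : Nat.Primes => -Real.log (1 - (p : ℝ) ^ (-t))) := by
  refine Summable.of_nonneg_of_le (fun p => ?_) (fun p => ?_)
    (((aux_summable_P ht).mul_left 2))
  · have := aux_log_lb (x := (p:ℝ) ^ (-t)) (by linarith [aux_x_le_half ht.le p])
    linarith [(aux_x_pos (t := t) p).le]
  · have h := aux_log_ub (aux_x_pos (t := t) p).le (aux_x_le_half ht.le p)
    have hx := aux_x_le_half ht.le p
    have hx0 := (aux_x_pos (t := t) p).le
    nlinarith [sq_nonneg ((p:ℝ)^(-t))]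

lemma aux_zeta_real {t : ℝ} (ht : 1 < t) :
    riemannZeta t = ((∑' n : ℕ, 1 / ((n : ℝ) + 1) ^ t : ℝ) : ℂ) := by
  rw [zeta_eq_tsum_one_div_nat_add_one_cpow (by simpa using ht), Complex.ofReal_tsum]
  congr 1 with n
  rw [Complex.ofReal_div, Complex.ofReal_one, Complex.ofReal_cpow (by positivity)]
  push_cast
  ring_nf

lemma aux_exp_L {t : ℝ} (ht : 1 < t) :
    Real.exp (∑' p : Nat.Primes, -Real.log (1 - (p : ℝ) ^ (-t))) =
      ∑' n : ℕ, 1 / ((n : ℝ) + 1) ^ t := by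
  have hz := riemannZeta_eulerProduct_exp_log (s := (t : ℂ)) (by simpa using ht)
  have hcast : (∑' p : Nat.Primes, -Complex.log (1 - (p : ℂ) ^ (-(t:ℂ)))) =
      ((∑' p : Nat.Primes, -Real.log (1 - (p : ℝ) ^ (-t)) : ℝ) : ℂ) := by
    rw [Complex.ofReal_tsum]
    congr 1 with p
    have hp0 : (0:ℝ) ≤ (p : ℝ) := by positivity
    have : ((p : ℂ) ^ (-(t:ℂ))) = (((p:ℝ) ^ (-t) : ℝ) : ℂ) := by
      rw [Complex.ofReal_cpow hp0]
      push_cast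
      ring_nf
    rw [this, ← Complex.ofReal_one, ← Complex.ofReal_sub,
      ← Complex.ofReal_log (by linarith [aux_x_le_half ht.le p]), ← Complex.ofReal_neg]
  rw [hcast, ← Complex.ofReal_exp, aux_zeta_real ht] at hz
  exact_mod_cast hz

lemma aux_key : ∃ K : ℝ, ∀ᶠ t in 𝓝[>] (1:ℝ),
    |(∑' p : Nat.Primes, (p : ℝ) ^ (-t)) - Real.log (1/(t-1))| ≤ K := by
  classical
  set C₂ : ℝ := ∑' p : Nat.Primes, (p : ℝ) ^ (-2 : ℝ) with hC₂def
  have hC₂sum : Summable (fun p : Nat.Primes => (p : ℝ) ^ (-2 : ℝ)) :=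
    Nat.Primes.summable_rpow.mpr (by norm_num)
  have hC₂0 : 0 ≤ C₂ := tsum_nonneg fun p => (aux_x_pos p).le
  set C : ℝ := ‖Real.eulerMascheroniConstant‖ + 1 with hCdef
  have hC0 : 0 < C := by positivity
  refine ⟨Real.log 2 + 2 * C₂, ?_⟩
  -- eventual bound on |Z t - 1/(t-1)|
  have hζ := ZetaAsymptotics.tendsto_riemannZeta_sub_one_div_nhds_right
  have hnorm : Tendsto (fun s : ℝ => ‖riemannZeta s - 1 / ((s:ℂ) - 1)‖) (𝓝[>] 1)
      (𝓝 ‖(Real.eulerMascheroniConstant : ℂ)‖) := hζ.norm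
  have hlt : ‖(Real.eulerMascheroniConstant : ℂ)‖ < C := by
    rw [Complex.norm_real]
    simp only [hCdef]
    linarith
  have hev1 : ∀ᶠ (t:ℝ) in 𝓝[>] (1:ℝ), ‖riemannZeta t - 1 / ((t:ℂ) - 1)‖ ≤ C :=
    hnorm.eventually_le_const hlt
  have hev2 : ∀ᶠ t in 𝓝[>] (1:ℝ), t ∈ Set.Ioo (1:ℝ) (1 + min (1/(2*C)) 1) :=
    Ioo_mem_nhdsGT (by
      have h0 : 0 < min (1/(2*C)) 1 := by positivity
      linarith)
  filter_upwards [hev1, hev2] with t hbound ht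
  obtain ⟨ht1, ht2⟩ := ht
  have htpos : 0 < t - 1 := by linarith
  set u : ℝ := 1 / (t - 1) with hu
  have hupos : 0 < u := by positivity
  have hu2C : 2 * C ≤ u := by
    have h1 : t - 1 < 1/(2*C) := by
      have := min_le_left (1/(2*C)) 1
      linarith
    rw [hu, le_div_iff₀ htpos]
    rw [lt_div_iff₀ (by positivity)] at h1
    linarith
  -- rewrite the complex bound as a real bound on Z t
  set Z : ℝ := ∑' n : ℕ, 1 / ((n : ℝ) + 1) ^ t with hZ
  have hzr : riemannZeta (t : ℂ) = (Z : ℂ) := by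
    rw [zeta_eq_tsum_one_div_nat_add_one_cpow (by simpa using ht1), hZ, Complex.ofReal_tsum]
    congr 1 with n
    rw [Complex.ofReal_div, Complex.ofReal_one, Complex.ofReal_cpow (by positivity)]
    push_cast
    ring_nf
  have hZbound : |Z - u| ≤ C := by
    have : riemannZeta (t:ℂ) - 1 / ((t:ℂ) - 1) = ((Z - u : ℝ) : ℂ) := by
      rw [hzr]
      push_cast [Complex.ofReal_inv]
      ring_nf
      norm_cast
      simp only [hu, Int.cast_negSucc]
      push_cast
      ring
    rw [this, Complex.norm_real, Real.norm_eq_abs] at hbound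
    exact hbound
  rw [abs_le] at hZbound
  -- bounds on Z
  have hZub : Z ≤ 2 * u := by nlinarith
  have hZlb : u / 2 ≤ Z := by nlinarith
  have hZpos : 0 < Z := by nlinarith
  -- L t = log Z
  set L : ℝ := ∑' p : Nat.Primes, -Real.log (1 - (p : ℝ) ^ (-t)) with hL
  have hLZ : L = Real.log Z := by
    rw [hZ, ← aux_exp_L ht1, Real.log_exp]
  set P : ℝ := ∑' p : Nat.Primes, (p : ℝ) ^ (-t) with hP
  -- P ≤ L
  have hPL : P ≤ L := by
    refine Summable.tsum_le_tsum (fun p => ?_) (aux_summable_P ht1) (aux_summable_log ht1)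
    exact aux_log_lb (by linarith [aux_x_le_half ht1.le p])
  -- L ≤ P + 2*C₂
  have hLP : L ≤ P + 2 * C₂ := by
    have hterm : ∀ p : Nat.Primes, -Real.log (1 - (p : ℝ) ^ (-t)) ≤
        (p : ℝ) ^ (-t) + 2 * (p : ℝ) ^ (-2 : ℝ) := by
      intro p
      have h1 := aux_log_ub (aux_x_pos (t := t) p).le (aux_x_le_half ht1.le p)
      have hp1 : (1:ℝ) ≤ (p : ℝ) := by exact_mod_cast p.prop.one_lt.le
      have hsq : ((p : ℝ) ^ (-t)) ^ 2 ≤ (p : ℝ) ^ (-2 : ℝ) := by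
        have he : ((p : ℝ) ^ (-t)) ^ (2:ℕ) = (p : ℝ) ^ (-t * 2) := by
          rw [← Real.rpow_natCast ((p:ℝ) ^ (-t)) 2, ← Real.rpow_mul (by linarith)]
          norm_num
        rw [he]
        exact Real.rpow_le_rpow_of_exponent_le hp1 (by linarith)
      linarith
    have hsum2 : Summable (fun p : Nat.Primes => (p : ℝ) ^ (-t) + 2 * (p : ℝ) ^ (-2:ℝ)) :=
      (aux_summable_P ht1).add (hC₂sum.mul_left 2)
    have := Summable.tsum_le_tsum hterm (aux_summable_log ht1) hsum2
    rw [Summable.tsum_add (aux_summable_P ht1) (hC₂sum.mul_left 2), tsum_mul_left] at this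
    exact this
  -- log bounds
  have hlogZub : Real.log Z ≤ Real.log u + Real.log 2 := by
    have := Real.log_le_log hZpos hZub
    rw [Real.log_mul (by norm_num) (ne_of_gt hupos)] at this
    linarith
  have hlogZlb : Real.log u - Real.log 2 ≤ Real.log Z := by
    have := Real.log_le_log (by positivity) hZlb
    rw [Real.log_div (ne_of_gt hupos) (by norm_num)] at this
    linarith
  rw [abs_le]
  rw [hLZ] at hPL hLP
  constructor <;> linarith

theorem stmt_9 (δ ε : ℝ) (hδ0 : 0 < δ) (hδ1 : δ < 1) (hε : 0 < ε) :
    Filter.Tendsto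
      (fun ℓ : ℕ =>
        ((∑' p : Nat.Primes, (p : ℝ) ^ (-(2 * (1/2 + 1/(2 * Real.exp ((ℓ : ℝ) ^ (1 - δ))))))) /
         (∑' p : Nat.Primes,
            (p : ℝ) ^ (-(2 * (1/2 + 1/(2 * Real.exp (((ℓ - 1 : ℕ) : ℝ) ^ (1 - δ)))))))) ^ ((1 + ε)/2))
      Filter.atTop (nhds 1) := by
  classical
  obtain ⟨K, hK⟩ := aux_key
  set K0 : ℝ := max K 0 with hK0def
  have hK0 : ∀ᶠ t in 𝓝[>] (1:ℝ),
      |(∑' p : Nat.Primes, (p : ℝ) ^ (-t)) - Real.log (1/(t-1))| ≤ K0 :=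
    hK.mono fun t h => h.trans (le_max_left _ _)
  -- notation
  set P : ℝ → ℝ := fun t => ∑' p : Nat.Primes, (p : ℝ) ^ (-t) with hPdef
  set s : ℝ → ℝ := fun x => 1 + (Real.exp x)⁻¹ with hsdef
  set a : ℕ → ℝ := fun ℓ => (ℓ : ℝ) ^ (1 - δ) with hadef
  set b : ℕ → ℝ := fun ℓ => ((ℓ - 1 : ℕ) : ℝ) ^ (1 - δ) with hbdef
  -- rewrite the exponent
  have hexp : ∀ x : ℝ, -(2 * (1/2 + 1/(2 * Real.exp x))) = -(s x) := by
    intro x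
    have h := Real.exp_pos x
    rw [hsdef]
    field_simp
  simp only [hexp]
  -- a, b tend to infinity
  have ha_top : Tendsto a atTop atTop :=
    (tendsto_rpow_atTop (by linarith : (0:ℝ) < 1 - δ)).comp tendsto_natCast_atTop_atTop
  have hsub : Tendsto (fun ℓ : ℕ => ℓ - 1) atTop atTop := tendsto_sub_atTop_nat 1
  have hb_top : Tendsto b atTop atTop := ha_top.comp hsub
  -- s ∘ (a, b) tend to 1 within Ioi 1
  have hs_tend : ∀ {f : ℕ → ℝ}, Tendsto f atTop atTop →
      Tendsto (fun ℓ => s (f ℓ)) atTop (𝓝[>] (1:ℝ)) := by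
    intro f hf
    rw [tendsto_nhdsWithin_iff]
    constructor
    · have h1 : Tendsto (fun ℓ => (Real.exp (f ℓ))⁻¹) atTop (𝓝 0) :=
        tendsto_inv_atTop_zero.comp (Real.tendsto_exp_atTop.comp hf)
      have := h1.const_add 1
      simpa [hsdef] using this
    · filter_upwards with ℓ
      have := Real.exp_pos (f ℓ)
      simp only [hsdef, Set.mem_Ioi]
      have : 0 < (Real.exp (f ℓ))⁻¹ := by positivity
      linarith
  have hlog : ∀ x : ℝ, Real.log (1/(s x - 1)) = x := by
    intro x
    simp [hsdef, one_div, inv_inv, Real.log_exp]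
  have hPa : ∀ᶠ ℓ : ℕ in atTop, |P (s (a ℓ)) - a ℓ| ≤ K0 := by
    filter_upwards [(hs_tend ha_top).eventually hK0] with ℓ h
    rwa [hlog] at h
  have hPb : ∀ᶠ ℓ : ℕ in atTop, |P (s (b ℓ)) - b ℓ| ≤ K0 := by
    filter_upwards [(hs_tend hb_top).eventually hK0] with ℓ h
    rwa [hlog] at h
  -- ratio to 1 lemma
  have hratio : ∀ {f : ℕ → ℝ}, Tendsto f atTop atTop →
      (∀ᶠ ℓ in atTop, |P (s (f ℓ)) - f ℓ| ≤ K0) →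
      Tendsto (fun ℓ => P (s (f ℓ)) / f ℓ) atTop (𝓝 1) := by
    intro f hf hPf
    have hd : Tendsto (fun ℓ => P (s (f ℓ)) / f ℓ - 1) atTop (𝓝 0) := by
      apply squeeze_zero_norm' (a := fun ℓ => K0 / f ℓ)
      · filter_upwards [hPf, hf.eventually_ge_atTop 1] with ℓ h h1
        have hfpos : (0:ℝ) < f ℓ := lt_of_lt_of_le one_pos h1
        have heq : P (s (f ℓ)) / f ℓ - 1 = (P (s (f ℓ)) - f ℓ) / f ℓ := by
          field_simp
        rw [Real.norm_eq_abs, heq, abs_div, abs_of_pos hfpos]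
        gcongr
      · exact tendsto_const_nhds.div_atTop hf
    have := hd.add (tendsto_const_nhds (x := (1:ℝ)))
    simpa using this
  have h1 := hratio ha_top hPa
  have h2 := hratio hb_top hPb
  -- a/b → 1
  have h3 : Tendsto (fun ℓ => a ℓ / b ℓ) atTop (𝓝 1) := by
    have hm : Tendsto (fun ℓ : ℕ => ((ℓ - 1 : ℕ) : ℝ)) atTop atTop :=
      tendsto_natCast_atTop_atTop.comp hsub
    have hq : Tendsto (fun ℓ : ℕ => (ℓ:ℝ) / ((ℓ - 1 : ℕ) : ℝ)) atTop (𝓝 1) := by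
      have h0 : Tendsto (fun ℓ : ℕ => 1 + (((ℓ - 1 : ℕ) : ℝ))⁻¹) atTop (𝓝 1) := by
        have := (tendsto_inv_atTop_zero.comp hm).const_add (1:ℝ)
        simpa using this
      apply h0.congr'
      filter_upwards [eventually_ge_atTop 2] with ℓ hℓ
      have h1 : ((ℓ - 1 : ℕ) : ℝ) ≥ 1 := by
        have : 1 ≤ ℓ - 1 := by omega
        exact_mod_cast this
      have hne : ((ℓ - 1 : ℕ) : ℝ) ≠ 0 := by linarith
      have hc : (ℓ : ℝ) = ((ℓ - 1 : ℕ) : ℝ) + 1 := by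
        have : ℓ = (ℓ - 1) + 1 := by omega
        rw [this]
        push_cast
        ring
      rw [hc, add_div, div_self hne, one_div, add_comm]
    have hq' : Tendsto (fun ℓ : ℕ => ((ℓ:ℝ) / ((ℓ - 1 : ℕ) : ℝ)) ^ (1 - δ)) atTop (𝓝 1) := by
      have := hq.rpow_const (p := 1 - δ) (Or.inr (by linarith))
      simpa using this
    apply hq'.congr'
    filter_upwards [eventually_ge_atTop 2] with ℓ hℓ
    have h1 : ((ℓ - 1 : ℕ) : ℝ) ≥ 1 := by
      have : 1 ≤ ℓ - 1 := by omega
      exact_mod_cast this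
    rw [hadef, hbdef]
    simp only
    rw [← Real.div_rpow (by positivity) (by linarith)]
  -- combine
  have h2inv := h2.inv₀ (by norm_num)
  have hfinal : Tendsto (fun ℓ => (P (s (a ℓ)) / a ℓ) * (a ℓ / b ℓ) * (P (s (b ℓ)) / b ℓ)⁻¹)
      atTop (𝓝 1) := by
    have := (h1.mul h3).mul h2inv
    simpa using this
  have hmain : Tendsto (fun ℓ => P (s (a ℓ)) / P (s (b ℓ))) atTop (𝓝 1) := by
    apply hfinal.congr'
    filter_upwards [ha_top.eventually_ge_atTop 1, hb_top.eventually_ge_atTop 1] with ℓ haℓ hbℓ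
    have hane : a ℓ ≠ 0 := by linarith
    have hbne : b ℓ ≠ 0 := by linarith
    rw [inv_div]
    have : (P (s (a ℓ)) / a ℓ) * (a ℓ / b ℓ) * (b ℓ / P (s (b ℓ))) =
        (P (s (a ℓ)) / P (s (b ℓ))) * ((a ℓ)⁻¹ * a ℓ) * ((b ℓ)⁻¹ * b ℓ) := by
      ring
    rw [this, inv_mul_cancel₀ hane, inv_mul_cancel₀ hbne, mul_one, mul_one]
  have := hmain.rpow_const (p := (1 + ε)/2) (Or.inl one_ne_zero)
  simpa using this
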